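/- Let Hypothesis (C) hold, let (u, w) ∈ W^{1,1}(0,T; X) × W^{1,1}(0,T; W), x₀ ∈ Z(w(0)), and let ξ ∈ W^{1,1}(0,T; X) solve the sweeping process (GP) with x(t) = u(t) − ξ(t). Define A(t) = ⟨ξ'(t), ∇ₓG(x(t), w(t))⟩ and B(t) = ⟨u'(t), ∇ₓG(x(t), w(t))⟩ + ⟨w'(t), ∇_wG(x(t), w(t))⟩_{W,W'}. Then for a.e. t ∈ (0,T) either (i) ξ'(t) = 0 and (d/dt)G(x(t), w(t)) = B(t); or (ii) ξ'(t) ≠ 0, x(t) ∈ ∂Z(w(t)), A(t) = B(t) > 0, G(x(t), w(t)) = 1 = max_{τ∈[0,T]} G(x(τ), w(τ)), (d/dt)G(x(t), w(t)) = 0, and ξ'(t) = (A(t)/|∇ₓG(x(t), w(t))|²)·∇ₓG(x(t), w(t)). Moreover, for a.e. t ∈ (0,T) one has |B(t)| ≤ |∇ₓG(x(t), w(t))|·|u'(t)| + K₁|w'(t)|_W and |ξ'(t)| ≤ |u'(t)| + (K₁/c)|w'(t)|_W. -/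

import Mathlib

open MeasureTheory Set Filter Metric
open scoped RealInnerProductSpace Topology

/-- `f ∈ W^{1,1}(0,T;Y)` with a.e. derivative `f'`: `f'` is Bochner integrable on `(0,T)`
and `f t = f 0 + ∫₀ᵗ f'` on `[0,T]`. -/
def IsW11 {Y : Type*} [NormedAddCommGroup Y] [NormedSpace ℝ Y] (T : ℝ) (f f' : ℝ → Y) : Prop :=
  IntegrableOn f' (Ioo 0 T) ∧ ∀ t ∈ Icc 0 T, f t = f 0 + ∫ s in (0:ℝ)..t, f' s

/-- Solution of the sweeping process (GP) with data `(u, w, x₀)`, where `ξ'` is the a.e.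
derivative of `ξ` and `x(t) = u(t) - ξ(t)`. -/
def IsGPSol {X W : Type*} [NormedAddCommGroup X] [InnerProductSpace ℝ X]
    (T r : ℝ) (Zs : W → Set X) (u : ℝ → X) (w : ℝ → W) (x₀ : X) (ξ ξ' : ℝ → X) : Prop :=
  (∀ t ∈ Icc 0 T, u t - ξ t ∈ Zs (w t)) ∧ u 0 - ξ 0 = x₀ ∧
    ∀ᵐ t ∂(volume.restrict (Ioo 0 T)), ∀ z ∈ Zs (w t),
      ⟪(u t - ξ t) - z, ξ' t⟫ + ‖ξ' t‖ / (2 * r) * ‖(u t - ξ t) - z‖ ^ 2 ≥ 0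


set_option linter.unusedSectionVars false
set_option maxHeartbeats 2000000
theorem IsW11.ae_hasDerivAt' {Y : Type*} [NormedAddCommGroup Y] [NormedSpace ℝ Y]
    [CompleteSpace Y] {T : ℝ} {f f' : ℝ → Y} (hf : IsW11 T f f') :
    ∀ᵐ t ∂(volume.restrict (Ioo 0 T)), HasDerivAt f (f' t) t := by
  set g : ℝ → Y := (Ioo 0 T).indicator f' with hg_def
  have hg : Integrable g volume := by
    rw [hg_def, integrable_indicator_iff measurableSet_Ioo]; exact hf.1
  have hleb := IsUnifLocDoublingMeasure.ae_tendsto_average_norm_sub (μ := (volume : Measure ℝ))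
    hg.locallyIntegrable 1
  rw [ae_restrict_iff' measurableSet_Ioo]
  filter_upwards [hleb] with t ht htmem
  have hlp : Tendsto (fun r : ℝ => ⨍ y in closedBall t r, ‖g y - g t‖) (𝓝[>] 0) (𝓝 0) :=
    ht (ι := ℝ) (fun _ => t) id tendsto_id
      (by filter_upwards [self_mem_nhdsWithin] with r (hr : 0 < r)
          exact mem_closedBall_self (by simpa using hr.le))
  -- integral identity
  have hne : ∀ᵐ τ ∂(volume : Measure ℝ), τ ≠ T := by
    rw [ae_iff]; push_neg; simpa using measure_singleton T
  have hgf : ∀ a ∈ Icc (0:ℝ) T, (∫ τ in (0:ℝ)..a, f' τ) = ∫ τ in (0:ℝ)..a, g τ := by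
    intro a ha
    apply intervalIntegral.integral_congr_ae
    filter_upwards [hne] with τ hτ hmem
    rw [uIoc_of_le ha.1] at hmem
    rw [hg_def, indicator_of_mem (Set.mem_Ioo.2 ⟨hmem.1, lt_of_le_of_ne (hmem.2.trans ha.2) hτ⟩)]
  have key : ∀ y ∈ Ioo 0 T, ∀ s ∈ Ioo 0 T, f y - f s = ∫ τ in s..y, g τ := by
    intro y hy s hs
    rw [hf.2 y (Ioo_subset_Icc_self hy), hf.2 s (Ioo_subset_Icc_self hs),
      hgf y (Ioo_subset_Icc_self hy), hgf s (Ioo_subset_Icc_self hs)]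
    have h1 : IntervalIntegrable g volume 0 y := hg.intervalIntegrable
    have h2 : IntervalIntegrable g volume 0 s := hg.intervalIntegrable
    rw [add_sub_add_left_eq_sub]
    exact intervalIntegral.integral_interval_sub_left h1 h2
  -- now prove HasDerivAt
  rw [hasDerivAt_iff_isLittleO, Asymptotics.isLittleO_iff]
  intro ε hε
  have hev1 : ∀ᶠ y in 𝓝 t, y ∈ Ioo 0 T := (isOpen_Ioo.eventually_mem htmem)
  have hev2 : ∀ᶠ r in 𝓝[>] (0:ℝ), ⨍ y in closedBall t r, ‖g y - g t‖ ≤ ε / 2 :=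
    hlp.eventually (eventually_le_nhds (by positivity))
  rw [eventually_nhdsWithin_iff] at hev2
  obtain ⟨δ, hδpos, hδ2⟩ := eventually_nhds_iff_ball.1 hev2
  have hev3 : ∀ᶠ y in 𝓝 t, |y - t| < δ := by
    have := Metric.ball_mem_nhds t hδpos
    filter_upwards [this] with y hy
    simpa [Real.dist_eq] using hy
  filter_upwards [hev1, hev3] with y hy hyδ
  rcases eq_or_ne y t with rfl | hyt
  · simp
  · have hrpos : 0 < |y - t| := by
      rw [abs_pos, sub_ne_zero]; exact hyt
    have havg : ⨍ z in closedBall t |y - t|, ‖g z - g t‖ ≤ ε / 2 := by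
      apply hδ2 _ _ hrpos
      rw [mem_ball, Real.dist_eq, sub_zero, abs_abs]
      exact hyδ
    have hIganorm : IntegrableOn (fun z => ‖g z - g t‖) (closedBall t |y - t|) volume :=
      ((hg.integrableOn.sub (integrableOn_const (by
        simp [Real.volume_closedBall, ENNReal.mul_eq_top]))).norm)
    have hball : volume (closedBall t |y - t|) = ENNReal.ofReal (2 * |y - t|) := by
      simp [Real.volume_closedBall, two_mul]
    -- rewrite f y - f t - (y - t) • f' t
    have hgt : g t = f' t := indicator_of_mem htmem f'
    have hid : f y - f t - (y - t) • f' t = ∫ τ in t..y, (g τ - g t) := by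
      rw [intervalIntegral.integral_sub hg.intervalIntegrable intervalIntegrable_const,
        intervalIntegral.integral_const, ← key y hy t htmem, hgt]
    rw [hid]
    calc ‖∫ τ in t..y, (g τ - g t)‖
        ≤ |∫ τ in t..y, ‖g τ - g t‖| := intervalIntegral.norm_integral_le_abs_integral_norm
      _ = ∫ τ in uIoc t y, ‖g τ - g t‖ := by
          rw [intervalIntegral.abs_integral_eq_abs_integral_uIoc]
          exact abs_of_nonneg (integral_nonneg fun τ => norm_nonneg _)
      _ ≤ ∫ τ in closedBall t |y - t|, ‖g τ - g t‖ := by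
          apply setIntegral_mono_set hIganorm
          · exact ae_of_all _ fun τ => norm_nonneg _
          · apply ae_of_all
            intro τ hτ
            have : τ ∈ uIcc t y := uIoc_subset_uIcc hτ
            show τ ∈ closedBall t |y - t|
            rw [mem_closedBall, Real.dist_eq]
            rcases le_total t y with h | h
            · rw [uIcc_of_le h] at this
              rw [abs_of_nonneg (by linarith [this.1] : (0:ℝ) ≤ τ - t), abs_of_nonneg (by linarith : (0:ℝ) ≤ y - t)]
              linarith [this.2]
            · rw [uIcc_of_ge h] at this
              rw [abs_of_nonpos (by linarith [this.2] : τ - t ≤ 0), abs_of_nonpos (by linarith : y - t ≤ 0)]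
              linarith [this.1]
      _ = (volume (closedBall t |y - t|)).toReal • ⨍ z in closedBall t |y - t|, ‖g z - g t‖ := by
          exact (measure_smul_setAverage _ (by rw [hball]; exact ENNReal.ofReal_ne_top)).symm
      _ ≤ (2 * |y - t|) * (ε / 2) := by
          rw [hball, ENNReal.toReal_ofReal (by positivity), smul_eq_mul]
          exact mul_le_mul_of_nonneg_left havg (by positivity)
      _ ≤ ε * ‖y - t‖ := by rw [Real.norm_eq_abs]; ring_nf; nlinarith [hε.le, hrpos.le]

section GradAux
variable {X W : Type*} [NormedAddCommGroup X] [InnerProductSpace ℝ X]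
  [NormedAddCommGroup W] [NormedSpace ℝ W]
  (G : X → W → ℝ) (Gx : X → W → X) (Gw : X → W → StrongDual ℝ W) (C₀ C₁ : ℝ)

theorem line_deriv_x
    (hgradxall : ∀ (x : X) (w : W), ∀ y : X,
      Tendsto (fun t : ℝ => (G (x + t • y) w - G x w) / t) (𝓝[≠] (0:ℝ)) (𝓝 ⟪Gx x w, y⟫))
    (x : X) (w : W) (h : X) (t₀ : ℝ) :
    HasDerivAt (fun t : ℝ => G (x + t • h) w) ⟪Gx (x + t₀ • h) w, h⟫ t₀ := by
  rw [hasDerivAt_iff_tendsto_slope]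
  have hmap : Tendsto (fun y : ℝ => y - t₀) (𝓝[≠] t₀) (𝓝[≠] (0:ℝ)) := by
    apply tendsto_nhdsWithin_of_tendsto_nhds_of_eventually_within
    · have := (continuous_id.sub (continuous_const (y := t₀))).tendsto t₀
      have h2 : Tendsto (fun y : ℝ => y - t₀) (𝓝[≠] t₀) (𝓝 (t₀ - t₀)) :=
        this.mono_left nhdsWithin_le_nhds
      rw [sub_self] at h2; exact h2
    · filter_upwards [self_mem_nhdsWithin] with y hy
      simpa [sub_ne_zero] using hy
  have H := (hgradxall (x + t₀ • h) w h).comp hmap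
  apply H.congr
  intro y
  simp only [Function.comp]
  rw [slope_def_field]
  congr 2
  rw [sub_smul]; abel

theorem line_deriv_w
    (hgradw : ∀ (x : X) (w : W) (v : W),
      Tendsto (fun t : ℝ => (G x (w + t • v) - G x w) / t) (𝓝[≠] (0:ℝ)) (𝓝 (Gw x w v)))
    (x : X) (w : W) (k : W) (t₀ : ℝ) :
    HasDerivAt (fun t : ℝ => G x (w + t • k)) (Gw x (w + t₀ • k) k) t₀ := by
  rw [hasDerivAt_iff_tendsto_slope]
  have hmap : Tendsto (fun y : ℝ => y - t₀) (𝓝[≠] t₀) (𝓝[≠] (0:ℝ)) := by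
    apply tendsto_nhdsWithin_of_tendsto_nhds_of_eventually_within
    · have := (continuous_id.sub (continuous_const (y := t₀))).tendsto t₀
      have h2 : Tendsto (fun y : ℝ => y - t₀) (𝓝[≠] t₀) (𝓝 (t₀ - t₀)) :=
        this.mono_left nhdsWithin_le_nhds
      rw [sub_self] at h2; exact h2
    · filter_upwards [self_mem_nhdsWithin] with y hy
      simpa [sub_ne_zero] using hy
  have H := (hgradw x (w + t₀ • k) k).comp hmap
  apply H.congr
  intro y
  simp only [Function.comp]
  rw [slope_def_field]
  congr 2
  rw [sub_smul]; abel

theorem quad_x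
    (hgradxall : ∀ (x : X) (w : W), ∀ y : X,
      Tendsto (fun t : ℝ => (G (x + t • y) w - G x w) / t) (𝓝[≠] (0:ℝ)) (𝓝 ⟪Gx x w, y⟫))
    (hlipx : ∀ (x x' : X) (w w' : W), ‖Gx x w - Gx x' w'‖ ≤ C₀ * (‖x - x'‖ + ‖w - w'‖))
    (hC₀ : 0 ≤ C₀) (x : X) (w : W) (h : X) :
    |G (x + h) w - G x w - ⟪Gx x w, h⟫| ≤ C₀ * ‖h‖ ^ 2 := by
  set φ : ℝ → ℝ := fun t => G (x + t • h) w - t * ⟪Gx x w, h⟫ with hφ_def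
  have hd : ∀ t ∈ Icc (0:ℝ) 1,
      HasDerivWithinAt φ (⟪Gx (x + t • h) w, h⟫ - ⟪Gx x w, h⟫) (Icc 0 1) t := by
    intro t _
    exact ((line_deriv_x G Gx hgradxall x w h t).sub
      (hasDerivAt_mul_const ⟪Gx x w, h⟫)).hasDerivWithinAt
  have hb : ∀ t ∈ Icc (0:ℝ) 1, ‖⟪Gx (x + t • h) w, h⟫ - ⟪Gx x w, h⟫‖ ≤ C₀ * ‖h‖ ^ 2 := by
    intro t ht
    rw [Real.norm_eq_abs, ← inner_sub_left]
    calc |⟪Gx (x + t • h) w - Gx x w, h⟫| ≤ ‖Gx (x + t • h) w - Gx x w‖ * ‖h‖ :=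
          abs_real_inner_le_norm _ _
      _ ≤ (C₀ * (‖x + t • h - x‖ + ‖w - w‖)) * ‖h‖ := by
          apply mul_le_mul_of_nonneg_right (hlipx _ _ _ _) (norm_nonneg _)
      _ ≤ C₀ * ‖h‖ ^ 2 := by
          rw [add_sub_cancel_left, sub_self, norm_zero, add_zero, norm_smul,
            Real.norm_eq_abs, abs_of_nonneg ht.1]
          have : t * ‖h‖ * ‖h‖ ≤ 1 * ‖h‖ * ‖h‖ := by
            apply mul_le_mul_of_nonneg_right (mul_le_mul_of_nonneg_right ht.2 (norm_nonneg _))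
              (norm_nonneg _)
          nlinarith [norm_nonneg h]
  have := Convex.norm_image_sub_le_of_norm_hasDerivWithin_le hd hb (convex_Icc 0 1)
    (left_mem_Icc.2 zero_le_one) (right_mem_Icc.2 zero_le_one)
  have hφ1 : φ 1 - φ 0 = G (x + h) w - G x w - ⟪Gx x w, h⟫ := by
    simp [hφ_def]; ring
  rw [Real.norm_eq_abs, hφ1] at this
  simpa using this
theorem quad_w
    (hgradw : ∀ (x : X) (w : W) (v : W),
      Tendsto (fun t : ℝ => (G x (w + t • v) - G x w) / t) (𝓝[≠] (0:ℝ)) (𝓝 (Gw x w v)))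
    (hlipw : ∀ (x x' : X) (w w' : W), ‖Gw x w - Gw x' w'‖ ≤ C₁ * (‖x - x'‖ + ‖w - w'‖))
    (hC₁ : 0 ≤ C₁) (x : X) (w : W) (k : W) :
    |G x (w + k) - G x w - Gw x w k| ≤ C₁ * ‖k‖ ^ 2 := by
  set φ : ℝ → ℝ := fun t => G x (w + t • k) - t * Gw x w k with hφ_def
  have hd : ∀ t ∈ Icc (0:ℝ) 1,
      HasDerivWithinAt φ (Gw x (w + t • k) k - Gw x w k) (Icc 0 1) t := by
    intro t _
    exact ((line_deriv_w G Gw hgradw x w k t).sub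
      (hasDerivAt_mul_const (Gw x w k))).hasDerivWithinAt
  have hb : ∀ t ∈ Icc (0:ℝ) 1, ‖Gw x (w + t • k) k - Gw x w k‖ ≤ C₁ * ‖k‖ ^ 2 := by
    intro t ht
    rw [Real.norm_eq_abs]
    have h1 : Gw x (w + t • k) k - Gw x w k = (Gw x (w + t • k) - Gw x w) k := by
      simp
    rw [h1]
    calc |(Gw x (w + t • k) - Gw x w) k| ≤ ‖Gw x (w + t • k) - Gw x w‖ * ‖k‖ :=
          (Gw x (w + t • k) - Gw x w).le_opNorm k
      _ ≤ (C₁ * (‖x - x‖ + ‖w + t • k - w‖)) * ‖k‖ :=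
          mul_le_mul_of_nonneg_right (hlipw _ _ _ _) (norm_nonneg _)
      _ ≤ C₁ * ‖k‖ ^ 2 := by
          rw [sub_self, norm_zero, zero_add, add_sub_cancel_left, norm_smul,
            Real.norm_eq_abs, abs_of_nonneg ht.1]
          have : t * ‖k‖ * ‖k‖ ≤ 1 * ‖k‖ * ‖k‖ :=
            mul_le_mul_of_nonneg_right (mul_le_mul_of_nonneg_right ht.2 (norm_nonneg _))
              (norm_nonneg _)
          nlinarith [norm_nonneg k]
  have := Convex.norm_image_sub_le_of_norm_hasDerivWithin_le hd hb (convex_Icc 0 1)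
    (left_mem_Icc.2 zero_le_one) (right_mem_Icc.2 zero_le_one)
  have hφ1 : φ 1 - φ 0 = G x (w + k) - G x w - Gw x w k := by
    simp [hφ_def]; ring
  rw [Real.norm_eq_abs, hφ1] at this
  simpa using this

theorem hasFDerivAt_G
    (hquadx : ∀ (x : X) (w : W) (h : X), |G (x + h) w - G x w - ⟪Gx x w, h⟫| ≤ C₀ * ‖h‖ ^ 2)
    (hquadw : ∀ (x : X) (w : W) (k : W), |G x (w + k) - G x w - Gw x w k| ≤ C₁ * ‖k‖ ^ 2)
    (hlipw : ∀ (x x' : X) (w w' : W), ‖Gw x w - Gw x' w'‖ ≤ C₁ * (‖x - x'‖ + ‖w - w'‖))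
    (hC₀ : 0 ≤ C₀) (hC₁ : 0 ≤ C₁) (x : X) (w : W) :
    HasFDerivAt (fun p : X × W => G p.1 p.2)
      ((innerSL ℝ (Gx x w)).comp (ContinuousLinearMap.fst ℝ X W) +
        (Gw x w).comp (ContinuousLinearMap.snd ℝ X W)) (x, w) := by
  rw [hasFDerivAt_iff_isLittleO_nhds_zero, Asymptotics.isLittleO_iff]
  intro c hc
  set M : ℝ := C₀ + 2 * C₁ + 1 with hM
  have hMpos : 0 < M := by positivity
  have hball : Metric.ball (0 : X × W) (c / M) ∈ 𝓝 (0 : X × W) :=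
    Metric.ball_mem_nhds _ (by positivity)
  filter_upwards [hball] with p hp
  obtain ⟨h, k⟩ := p
  have hn : ‖(h, k)‖ < c / M := by simpa [Real.dist_eq] using hp
  have hh : ‖h‖ ≤ ‖(h, k)‖ := norm_fst_le (h, k)
  have hk : ‖k‖ ≤ ‖(h, k)‖ := norm_snd_le (h, k)
  have e1 : |G (x + h) (w + k) - G (x + h) w - Gw (x + h) w k| ≤ C₁ * ‖k‖ ^ 2 :=
    hquadw (x + h) w k
  have e2 : |Gw (x + h) w k - Gw x w k| ≤ C₁ * ‖h‖ * ‖k‖ := by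
    have h1 : Gw (x + h) w k - Gw x w k = (Gw (x + h) w - Gw x w) k := by simp
    rw [h1]
    calc |(Gw (x + h) w - Gw x w) k| ≤ ‖Gw (x + h) w - Gw x w‖ * ‖k‖ :=
          (Gw (x + h) w - Gw x w).le_opNorm k
      _ ≤ (C₁ * (‖x + h - x‖ + ‖w - w‖)) * ‖k‖ :=
          mul_le_mul_of_nonneg_right (hlipw _ _ _ _) (norm_nonneg _)
      _ = C₁ * ‖h‖ * ‖k‖ := by rw [add_sub_cancel_left, sub_self, norm_zero, add_zero]
  have e3 : |G (x + h) w - G x w - ⟪Gx x w, h⟫| ≤ C₀ * ‖h‖ ^ 2 := hquadx x w h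
  have key : |G (x + h) (w + k) - G x w - (⟪Gx x w, h⟫ + Gw x w k)| ≤ M * ‖(h, k)‖ ^ 2 := by
    have tri : |G (x + h) (w + k) - G x w - (⟪Gx x w, h⟫ + Gw x w k)| ≤
        |G (x + h) (w + k) - G (x + h) w - Gw (x + h) w k| + |Gw (x + h) w k - Gw x w k|
          + |G (x + h) w - G x w - ⟪Gx x w, h⟫| := by
      have : G (x + h) (w + k) - G x w - (⟪Gx x w, h⟫ + Gw x w k) =
          (G (x + h) (w + k) - G (x + h) w - Gw (x + h) w k) + (Gw (x + h) w k - Gw x w k)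
            + (G (x + h) w - G x w - ⟪Gx x w, h⟫) := by ring
      rw [this]
      exact (abs_add_le _ _).trans (add_le_add_left (abs_add_le _ _) _)
    have hnn : (0:ℝ) ≤ ‖(h, k)‖ := norm_nonneg _
    calc |G (x + h) (w + k) - G x w - (⟪Gx x w, h⟫ + Gw x w k)| ≤ _ := tri
      _ ≤ C₁ * ‖k‖ ^ 2 + C₁ * ‖h‖ * ‖k‖ + C₀ * ‖h‖ ^ 2 := by linarith [e1, e2, e3]
      _ ≤ M * ‖(h, k)‖ ^ 2 := by
          have s1 : ‖k‖ ^ 2 ≤ ‖(h, k)‖ ^ 2 := by nlinarith [hk, norm_nonneg k]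
          have s2 : ‖h‖ ^ 2 ≤ ‖(h, k)‖ ^ 2 := by nlinarith [hh, norm_nonneg h]
          have s3 : ‖h‖ * ‖k‖ ≤ ‖(h, k)‖ ^ 2 := by
            nlinarith [mul_le_mul hh hk (norm_nonneg k) hnn]
          have b1 : C₁ * ‖k‖ ^ 2 ≤ C₁ * ‖(h, k)‖ ^ 2 := mul_le_mul_of_nonneg_left s1 hC₁
          have b2 : C₁ * ‖h‖ * ‖k‖ ≤ C₁ * ‖(h, k)‖ ^ 2 := by
            rw [mul_assoc]; exact mul_le_mul_of_nonneg_left s3 hC₁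
          have b3 : C₀ * ‖h‖ ^ 2 ≤ C₀ * ‖(h, k)‖ ^ 2 := mul_le_mul_of_nonneg_left s2 hC₀
          have : M * ‖(h, k)‖ ^ 2 = C₀ * ‖(h, k)‖ ^ 2 + 2 * (C₁ * ‖(h, k)‖ ^ 2) + ‖(h, k)‖ ^ 2 := by
            rw [hM]; ring
          rw [this]
          nlinarith [sq_nonneg ‖(h, k)‖]
  have : ‖G (x + h) (w + k) - G x w - (⟪Gx x w, h⟫ + Gw x w k)‖ ≤ c * ‖(h, k)‖ := by
    rw [Real.norm_eq_abs]
    calc |G (x + h) (w + k) - G x w - (⟪Gx x w, h⟫ + Gw x w k)| ≤ M * ‖(h, k)‖ ^ 2 := key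
      _ ≤ c * ‖(h, k)‖ := by
          rcases eq_or_lt_of_le (norm_nonneg ((h, k) : X × W)) with h0 | h0
          · rw [← h0]; simp
          · have h1 : ‖(h, k)‖ * M ≤ c := (le_div_iff₀ hMpos).1 hn.le
            nlinarith
  simpa using this
end GradAux


/-- Lemma 3.2 of the paper: a.e. dichotomy for the solution of the sweeping process, and
the a priori bounds on `B` and `ξ′`. Here `A(t) = ⟪ξ′(t), ∇ₓG(x(t),w(t))⟫` and
`B(t) = ⟪u′(t), ∇ₓG(x(t),w(t))⟫ + ⟨w′(t), ∇_wG(x(t),w(t))⟩`. -/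
theorem sweeping_dichotomy
    {X W : Type*} [NormedAddCommGroup X] [InnerProductSpace ℝ X] [CompleteSpace X]
    [NormedAddCommGroup W] [NormedSpace ℝ W] [CompleteSpace W]
    (G : X → W → ℝ) (hGnonneg : ∀ (x : X) (w : W), 0 ≤ G x w)
    (hGlip : LocallyLipschitz (fun p : X × W => G p.1 p.2))
    (Zs : W → Set X) (hZ : ∀ w, Zs w = {z : X | G z w ≤ 1})
    (Gx : X → W → X)
    (hgradx : ∀ w : W, ∀ z ∈ Zs w, ∀ y : X,
      Tendsto (fun t : ℝ => (G (z + t • y) w - G z w) / t) (𝓝[≠] (0:ℝ)) (𝓝 ⟪Gx z w, y⟫))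
    (lam c L : ℝ) (hlam : 0 < lam) (hc : 0 < c) (hL : 0 < L)
    (μ₁ : W → ℝ → ℝ) (μ₂ : ℝ → ℝ)
    (hμ₁zero : ∀ w, μ₁ w 0 = 0) (hμ₂zero : μ₂ 0 = 0)
    (hμ₁top : ∀ w, Tendsto (μ₁ w) atTop atTop) (hμ₂top : Tendsto μ₂ atTop atTop)
    (hyp1 : ∀ (x : X) (w : W), G x w = 1 → c ≤ ‖Gx x w‖)
    (hyp2 : ∀ w : W, ∀ x ∈ Zs w, ∀ y ∈ Zs w, ‖Gx x w - Gx y w‖ ≤ μ₁ w ‖x - y‖)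
    (hyp3 : ∀ w : W, ∀ x ∈ frontier (Zs w), ∀ z ∈ Zs w,
      ⟪Gx x w - Gx z w, x - z⟫ ≥ -lam * ‖x - z‖ ^ 2)
    (hyp4 : ∀ (x : X) (w w' : W), |G x w - G x w'| ≤ L * ‖w - w'‖)
    (hyp5 : ∀ ρ > (0:ℝ), ∀ (w : W) (x : X), ρ ≤ infDist x (Zs w) → μ₂ ρ ≤ G x w - 1)
    (Gw : X → W → StrongDual ℝ W)
    (hgradxall : ∀ (x : X) (w : W), ∀ y : X,
      Tendsto (fun t : ℝ => (G (x + t • y) w - G x w) / t) (𝓝[≠] (0:ℝ)) (𝓝 ⟪Gx x w, y⟫))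
    (hgradw : ∀ (x : X) (w : W) (v : W),
      Tendsto (fun t : ℝ => (G x (w + t • v) - G x w) / t) (𝓝[≠] (0:ℝ)) (𝓝 (Gw x w v)))
    (K₀ K₁ C₀ C₁ : ℝ) (hK₀ : 0 < K₀) (hK₁ : 0 < K₁) (hC₀ : 0 < C₀) (hC₁ : 0 < C₁)
    (hbdx : ∀ (x : X) (w : W), ‖Gx x w‖ ≤ K₀)
    (hbdw : ∀ (x : X) (w : W), ‖Gw x w‖ ≤ K₁)
    (hlipx : ∀ (x x' : X) (w w' : W), ‖Gx x w - Gx x' w'‖ ≤ C₀ * (‖x - x'‖ + ‖w - w'‖))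
    (hlipw : ∀ (x x' : X) (w w' : W), ‖Gw x w - Gw x' w'‖ ≤ C₁ * (‖x - x'‖ + ‖w - w'‖))
    (T : ℝ) (hT : 0 < T)
    (u u' : ℝ → X) (hu : IsW11 T u u')
    (w w' : ℝ → W) (hw : IsW11 T w w')
    (x₀ : X) (hx₀ : x₀ ∈ Zs (w 0))
    (ξ ξ' : ℝ → X) (hξ : IsW11 T ξ ξ')
    (hsol : IsGPSol T (c / lam) Zs u w x₀ ξ ξ') :
    (∀ᵐ t ∂(volume.restrict (Ioo 0 T)),
      (ξ' t = 0 ∧ HasDerivAt (fun τ => G (u τ - ξ τ) (w τ))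
          (⟪u' t, Gx (u t - ξ t) (w t)⟫ + Gw (u t - ξ t) (w t) (w' t)) t) ∨
      (ξ' t ≠ 0 ∧ (u t - ξ t) ∈ frontier (Zs (w t)) ∧
        ⟪ξ' t, Gx (u t - ξ t) (w t)⟫ =
          ⟪u' t, Gx (u t - ξ t) (w t)⟫ + Gw (u t - ξ t) (w t) (w' t) ∧
        0 < ⟪ξ' t, Gx (u t - ξ t) (w t)⟫ ∧
        G (u t - ξ t) (w t) = 1 ∧
        (∀ τ ∈ Icc 0 T, G (u τ - ξ τ) (w τ) ≤ G (u t - ξ t) (w t)) ∧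
        HasDerivAt (fun τ => G (u τ - ξ τ) (w τ)) 0 t ∧
        ξ' t = (⟪ξ' t, Gx (u t - ξ t) (w t)⟫ / ‖Gx (u t - ξ t) (w t)‖ ^ 2) •
          Gx (u t - ξ t) (w t))) ∧
    (∀ᵐ t ∂(volume.restrict (Ioo 0 T)),
      |⟪u' t, Gx (u t - ξ t) (w t)⟫ + Gw (u t - ξ t) (w t) (w' t)| ≤
        ‖Gx (u t - ξ t) (w t)‖ * ‖u' t‖ + K₁ * ‖w' t‖ ∧
      ‖ξ' t‖ ≤ ‖u' t‖ + K₁ / c * ‖w' t‖) := by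
  classical
  obtain ⟨hmem, hx0, hVI⟩ := hsol
  have hr : 0 < c / lam := div_pos hc hlam
  set r : ℝ := c / lam with hr_def
  have hquadx : ∀ (x : X) (w : W) (h : X), |G (x + h) w - G x w - ⟪Gx x w, h⟫| ≤ C₀ * ‖h‖ ^ 2 :=
    quad_x G Gx C₀ hgradxall hlipx hC₀.le
  have hquadw : ∀ (x : X) (w : W) (k : W), |G x (w + k) - G x w - Gw x w k| ≤ C₁ * ‖k‖ ^ 2 :=
    quad_w G Gw C₁ hgradw hlipw hC₁.le
  have hFD : ∀ (x : X) (w : W), HasFDerivAt (fun p : X × W => G p.1 p.2)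
      ((innerSL ℝ (Gx x w)).comp (ContinuousLinearMap.fst ℝ X W) +
        (Gw x w).comp (ContinuousLinearMap.snd ℝ X W)) (x, w) :=
    fun x w => hasFDerivAt_G G Gx Gw C₀ C₁ hquadx hquadw hlipw hC₀.le hC₁.le x w
  have hud := hu.ae_hasDerivAt'
  have hwd := hw.ae_hasDerivAt'
  have hξd := hξ.ae_hasDerivAt'
  have hmemIoo : ∀ᵐ t ∂(volume.restrict (Ioo 0 T)), t ∈ Ioo 0 T :=
    ae_restrict_mem measurableSet_Ioo
  have main : ∀ᵐ t ∂(volume.restrict (Ioo 0 T)),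
      (ξ' t = 0 ∧ HasDerivAt (fun τ => G (u τ - ξ τ) (w τ))
          (⟪u' t, Gx (u t - ξ t) (w t)⟫ + Gw (u t - ξ t) (w t) (w' t)) t) ∨
      (ξ' t ≠ 0 ∧ (u t - ξ t) ∈ frontier (Zs (w t)) ∧
        ⟪ξ' t, Gx (u t - ξ t) (w t)⟫ =
          ⟪u' t, Gx (u t - ξ t) (w t)⟫ + Gw (u t - ξ t) (w t) (w' t) ∧
        0 < ⟪ξ' t, Gx (u t - ξ t) (w t)⟫ ∧
        G (u t - ξ t) (w t) = 1 ∧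
        (∀ τ ∈ Icc 0 T, G (u τ - ξ τ) (w τ) ≤ G (u t - ξ t) (w t)) ∧
        HasDerivAt (fun τ => G (u τ - ξ τ) (w τ)) 0 t ∧
        ξ' t = (⟪ξ' t, Gx (u t - ξ t) (w t)⟫ / ‖Gx (u t - ξ t) (w t)‖ ^ 2) •
          Gx (u t - ξ t) (w t)) := by
    filter_upwards [hud, hwd, hξd, hVI, hmemIoo] with t hut hwt hξt hVIt htO
    set a : X := u t - ξ t with ha_def
    set gx : X := Gx a (w t) with hgx_def
    set gw : StrongDual ℝ W := Gw a (w t) with hgw_def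
    have ha : a ∈ Zs (w t) := hmem t (Ioo_subset_Icc_self htO)
    have hGa_le : G a (w t) ≤ 1 := by rw [hZ] at ha; exact ha
    -- chain rule
    have hpair : HasDerivAt (fun τ => (u τ - ξ τ, w τ)) (u' t - ξ' t, w' t) t :=
      (hut.sub hξt).prodMk hwt
    have hchain : HasDerivAt (fun τ => G (u τ - ξ τ) (w τ))
        (⟪gx, u' t - ξ' t⟫ + gw (w' t)) t := by
      have h0 := (hFD a (w t)).comp_hasDerivAt t hpair
      have heq : ((innerSL ℝ gx).comp (ContinuousLinearMap.fst ℝ X W) +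
          (gw).comp (ContinuousLinearMap.snd ℝ X W)) (u' t - ξ' t, w' t)
            = ⟪gx, u' t - ξ' t⟫ + gw (w' t) := by
        simp
      rw [heq] at h0
      exact h0
    by_cases hξ0 : ξ' t = 0
    · left
      refine ⟨hξ0, ?_⟩
      have : ⟪gx, u' t - ξ' t⟫ + gw (w' t) = ⟪u' t, gx⟫ + gw (w' t) := by
        rw [hξ0, sub_zero, real_inner_comm]
      rw [this] at hchain
      exact hchain
    · right
      have hξnorm : 0 < ‖ξ' t‖ := norm_pos_iff.2 hξ0
      set e : X := ‖ξ' t‖⁻¹ • ξ' t with he_def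
      have he_norm : ‖e‖ = 1 := by
        rw [he_def, norm_smul, norm_inv, norm_norm, inv_mul_cancel₀ hξnorm.ne']
      have he_inner : ⟪e, ξ' t⟫ = ‖ξ' t‖ := by
        rw [he_def, real_inner_smul_left, real_inner_self_eq_norm_sq, sq, ← mul_assoc,
          inv_mul_cancel₀ hξnorm.ne', one_mul]
      -- moving slightly along e must exit the set
      have hexit : ∀ s : ℝ, 0 < s → a + s • e ∈ Zs (w t) → 2 * r ≤ s := by
        intro s hs hz
        have hvi := hVIt (a + s • e) hz
        have h1 : a - (a + s • e) = -(s • e) := by abel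
        rw [h1] at hvi
        have h2 : ⟪-(s • e), ξ' t⟫ = -(s * ‖ξ' t‖) := by
          rw [inner_neg_left, real_inner_smul_left, he_inner]
        have h3 : ‖-(s • e)‖ ^ 2 = s ^ 2 := by
          rw [norm_neg, norm_smul, he_norm, Real.norm_eq_abs, abs_of_pos hs]; ring
        rw [h2, h3] at hvi
        have h2r : 0 < 2 * r := by positivity
        have h4 : s * ‖ξ' t‖ ≤ ‖ξ' t‖ / (2 * r) * s ^ 2 := by linarith
        rw [div_mul_eq_mul_div, le_div_iff₀ h2r] at h4
        nlinarith [mul_pos hs hξnorm]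
      -- G a (w t) = 1
      have hG1 : G a (w t) = 1 := by
        by_contra hne
        have hlt : G a (w t) < 1 := lt_of_le_of_ne hGa_le hne
        set d : ℝ := 1 - G a (w t) with hd_def
        have hd : 0 < d := by linarith
        have hd1 : d ≤ 1 := by have := hGnonneg a (w t); linarith
        set s : ℝ := min r (d / (K₀ + C₀ + 1)) with hs_def
        have hspos : 0 < s := lt_min hr (by positivity)
        have hs1 : s ≤ 1 := by
          have h1 : s ≤ d / (K₀ + C₀ + 1) := min_le_right _ _
          have h2 : d / (K₀ + C₀ + 1) ≤ 1 := by
            rw [div_le_one (by positivity)]; nlinarith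
          linarith
        have hsmall : s * (K₀ + C₀) < d := by
          have h1 : s ≤ d / (K₀ + C₀ + 1) := min_le_right _ _
          rw [le_div_iff₀ (by positivity)] at h1
          nlinarith
        have hzin : a + s • e ∈ Zs (w t) := by
          rw [hZ]
          show G (a + s • e) (w t) ≤ 1
          have hq := hquadx a (w t) (s • e)
          have hin : ⟪gx, s • e⟫ ≤ K₀ * s := by
            calc ⟪gx, s • e⟫ ≤ ‖gx‖ * ‖s • e‖ := real_inner_le_norm _ _
              _ ≤ K₀ * s := by
                  rw [norm_smul, he_norm, Real.norm_eq_abs, abs_of_pos hspos, mul_one]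
                  exact mul_le_mul_of_nonneg_right (hbdx a (w t)) hspos.le
          have hnse : ‖s • e‖ ^ 2 = s ^ 2 := by
            rw [norm_smul, he_norm, Real.norm_eq_abs, abs_of_pos hspos]; ring
          rw [hnse] at hq
          have habs := (abs_le.1 hq).2
          have : G (a + s • e) (w t) ≤ G a (w t) + K₀ * s + C₀ * s ^ 2 := by
            have := sub_le_iff_le_add.1 habs
            nlinarith [hin]
          have hC₀s : C₀ * s ^ 2 ≤ C₀ * s := by nlinarith [mul_nonneg (mul_nonneg hC₀.le hspos.le) (sub_nonneg.2 hs1)]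
          nlinarith
        have := hexit s hspos hzin
        have : s ≤ r := min_le_left _ _
        linarith [hexit s hspos hzin]
      -- frontier membership
      have hnotint : a ∉ interior (Zs (w t)) := by
        intro hint
        obtain ⟨ε, hε, hball⟩ := Metric.isOpen_iff.1 isOpen_interior a hint
        set s : ℝ := min (ε / 2) r with hs_def
        have hspos : 0 < s := lt_min (by positivity) hr
        have hzin : a + s • e ∈ Zs (w t) := by
          apply interior_subset
          apply hball
          rw [mem_ball, dist_eq_norm, add_sub_cancel_left, norm_smul, he_norm,
            Real.norm_eq_abs, abs_of_pos hspos, mul_one]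
          calc s ≤ ε / 2 := min_le_left _ _
            _ < ε := by linarith
        have h2r := hexit s hspos hzin
        have : s ≤ r := min_le_right _ _
        linarith
      have hfront : a ∈ frontier (Zs (w t)) := by
        rw [← closure_diff_interior]
        exact ⟨subset_closure ha, hnotint⟩
      -- gradient norm bound below
      have hgxc : c ≤ ‖gx‖ := hyp1 a (w t) hG1
      have hgxpos : 0 < ‖gx‖ := lt_of_lt_of_le hc hgxc
      -- cone property
      have hlt_cone : ∀ v : X, ⟪gx, v⟫ < 0 → ⟪v, ξ' t⟫ ≤ 0 := by
        intro v hv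
        have hvne : v ≠ 0 := by
          intro h0; rw [h0, inner_zero_right] at hv; exact lt_irrefl _ hv
        have hvnorm : 0 < ‖v‖ := norm_pos_iff.2 hvne
        have key : ∀ s : ℝ, 0 < s → s ≤ -⟪gx, v⟫ / (C₀ * ‖v‖ ^ 2 + 1) →
            ⟪v, ξ' t⟫ ≤ ‖ξ' t‖ * s * ‖v‖ ^ 2 / (2 * r) := by
          intro s hs hsle
          have hzin : a + s • v ∈ Zs (w t) := by
            rw [hZ]
            show G (a + s • v) (w t) ≤ 1
            have hq := (abs_le.1 (hquadx a (w t) (s • v))).2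
            have hnsv : ‖s • v‖ ^ 2 = s ^ 2 * ‖v‖ ^ 2 := by
              rw [norm_smul, Real.norm_eq_abs, abs_of_pos hs]; ring
            have hinn : ⟪gx, s • v⟫ = s * ⟪gx, v⟫ := real_inner_smul_right _ _ _
            rw [hnsv, hinn] at hq
            have hs2 : C₀ * s * ‖v‖ ^ 2 ≤ -⟪gx, v⟫ := by
              rw [le_div_iff₀ (by positivity)] at hsle
              nlinarith
            nlinarith [hG1]
          have hvi := hVIt (a + s • v) hzin
          have h1 : a - (a + s • v) = -(s • v) := by abel
          rw [h1, inner_neg_left, real_inner_smul_left] at hvi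
          have h3 : ‖-(s • v)‖ ^ 2 = s ^ 2 * ‖v‖ ^ 2 := by
            rw [norm_neg, norm_smul, Real.norm_eq_abs, abs_of_pos hs]; ring
          rw [h3] at hvi
          have h2r : 0 < 2 * r := by positivity
          have hkey : s * ⟪v, ξ' t⟫ ≤ ‖ξ' t‖ / (2 * r) * (s ^ 2 * ‖v‖ ^ 2) := by linarith
          rw [le_div_iff₀ h2r]
          apply le_of_mul_le_mul_left _ hs
          calc s * (⟪v, ξ' t⟫ * (2 * r)) = (s * ⟪v, ξ' t⟫) * (2 * r) := by ring
            _ ≤ (‖ξ' t‖ / (2 * r) * (s ^ 2 * ‖v‖ ^ 2)) * (2 * r) :=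
                mul_le_mul_of_nonneg_right hkey h2r.le
            _ = s * (‖ξ' t‖ * s * ‖v‖ ^ 2) := by field_simp
        apply le_of_forall_pos_le_add
        intro ε hε
        set s : ℝ := min (-⟪gx, v⟫ / (C₀ * ‖v‖ ^ 2 + 1))
          (2 * r * ε / (‖ξ' t‖ * ‖v‖ ^ 2 + 1)) with hs_def
        have hspos : 0 < s :=
          lt_min (div_pos (by linarith) (by positivity)) (by positivity)
        have h1 := key s hspos (min_le_left _ _)
        have h2 : s ≤ 2 * r * ε / (‖ξ' t‖ * ‖v‖ ^ 2 + 1) := min_le_right _ _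
        have h3 : ‖ξ' t‖ * s * ‖v‖ ^ 2 / (2 * r) ≤ ε := by
          rw [div_le_iff₀ (by positivity : (0:ℝ) < 2 * r)]
          rw [le_div_iff₀ (by positivity)] at h2
          nlinarith [norm_nonneg v, hξnorm.le]
        linarith
      have hcone : ∀ v : X, ⟪gx, v⟫ ≤ 0 → ⟪v, ξ' t⟫ ≤ 0 := by
        intro v hv
        apply le_of_forall_pos_le_add
        intro ε hε
        set δ : ℝ := ε / (|⟪gx, ξ' t⟫| + 1) with hδ_def
        have hδpos : 0 < δ := by positivity
        have hgd : ⟪gx, v - δ • gx⟫ < 0 := by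
          rw [inner_sub_right, real_inner_smul_right, real_inner_self_eq_norm_sq]
          nlinarith [mul_pos hδpos (mul_pos hc hc),
            mul_le_mul_of_nonneg_left (mul_le_mul hgxc hgxc hc.le (norm_nonneg gx)) hδpos.le]
        have := hlt_cone _ hgd
        rw [inner_sub_left, real_inner_smul_left] at this
        have h4 : ⟪v, ξ' t⟫ ≤ δ * ⟪gx, ξ' t⟫ := by linarith
        have h5 : δ * ⟪gx, ξ' t⟫ ≤ δ * |⟪gx, ξ' t⟫| :=
          mul_le_mul_of_nonneg_left (le_abs_self _) hδpos.le
        have h6 : δ * |⟪gx, ξ' t⟫| ≤ ε := by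
          rw [hδ_def, div_mul_eq_mul_div, div_le_iff₀ (by positivity)]
          nlinarith [abs_nonneg ⟪gx, ξ' t⟫]
        linarith
      -- A nonneg
      have hA_nonneg : 0 ≤ ⟪ξ' t, gx⟫ := by
        have h1 : ⟪gx, -gx⟫ ≤ 0 := by
          rw [inner_neg_right, real_inner_self_eq_norm_sq]; nlinarith
        have h2 := hcone _ h1
        rw [inner_neg_left, real_inner_comm] at h2
        linarith
      -- colinearity
      have hgx2 : ‖gx‖ ^ 2 ≠ 0 := by positivity
      set α : ℝ := ⟪ξ' t, gx⟫ / ‖gx‖ ^ 2 with hα_def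
      have hcol : ξ' t = α • gx := by
        set p : X := ξ' t - α • gx with hp_def
        have hgp : ⟪gx, p⟫ = 0 := by
          rw [hp_def, inner_sub_right, real_inner_smul_right, real_inner_self_eq_norm_sq,
            hα_def]
          rw [div_mul_cancel₀ _ hgx2, real_inner_comm]
          ring
        have h1 := hcone p hgp.le
        have h2 : ⟪p, ξ' t⟫ = ‖p‖ ^ 2 := by
          have : ⟪p, ξ' t⟫ = ⟪p, p⟫ + α * ⟪p, gx⟫ := by
            rw [← real_inner_smul_right, ← inner_add_right, hp_def]
            congr 1
            abel
          rw [this, real_inner_self_eq_norm_sq, real_inner_comm, hgp]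
          ring
        rw [h2] at h1
        have hp0 : p = 0 := by
          rw [← norm_eq_zero]
          nlinarith [norm_nonneg p]
        rw [hp_def, sub_eq_zero] at hp0
        exact hp0
      have hApos : 0 < ⟪ξ' t, gx⟫ := by
        rcases lt_or_eq_of_le hA_nonneg with h | h
        · exact h
        · exfalso
          apply hξ0
          rw [hcol, hα_def, ← h]
          simp
      -- max property
      have hmax : ∀ τ ∈ Icc 0 T, G (u τ - ξ τ) (w τ) ≤ G a (w t) := by
        intro τ hτ
        rw [hG1]
        have := hmem τ hτ
        rw [hZ] at this
        exact this
      -- derivative zero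
      have hloc : IsLocalMax (fun τ => G (u τ - ξ τ) (w τ)) t := by
        filter_upwards [isOpen_Ioo.mem_nhds htO] with τ hτ
        exact hmax τ (Ioo_subset_Icc_self hτ)
      have hd0 : ⟪gx, u' t - ξ' t⟫ + gw (w' t) = 0 := hloc.hasDerivAt_eq_zero hchain
      have hAB : ⟪ξ' t, gx⟫ = ⟪u' t, gx⟫ + gw (w' t) := by
        rw [inner_sub_right] at hd0
        have e1 : ⟪gx, u' t⟫ = ⟪u' t, gx⟫ := real_inner_comm _ _
        have e2 : ⟪gx, ξ' t⟫ = ⟪ξ' t, gx⟫ := real_inner_comm _ _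
        linarith
      have hderiv0 : HasDerivAt (fun τ => G (u τ - ξ τ) (w τ)) 0 t := by
        rw [← hd0]
        exact hchain
      exact ⟨hξ0, hfront, hAB, hApos, hG1, hmax, hderiv0, hcol⟩
  refine ⟨main, ?_⟩
  filter_upwards [main] with t hmain
  set a : X := u t - ξ t with ha_def
  set gx : X := Gx a (w t) with hgx_def
  set gw : StrongDual ℝ W := Gw a (w t) with hgw_def
  have hBbd : |⟪u' t, gx⟫ + gw (w' t)| ≤ ‖gx‖ * ‖u' t‖ + K₁ * ‖w' t‖ := by
    calc |⟪u' t, gx⟫ + gw (w' t)| ≤ |⟪u' t, gx⟫| + |gw (w' t)| := abs_add_le _ _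
      _ ≤ ‖gx‖ * ‖u' t‖ + K₁ * ‖w' t‖ := by
          have h1 : |⟪u' t, gx⟫| ≤ ‖u' t‖ * ‖gx‖ := abs_real_inner_le_norm _ _
          have h2 : |gw (w' t)| ≤ ‖gw‖ * ‖w' t‖ := gw.le_opNorm (w' t)
          have h3 : ‖gw‖ * ‖w' t‖ ≤ K₁ * ‖w' t‖ :=
            mul_le_mul_of_nonneg_right (hbdw a (w t)) (norm_nonneg _)
          nlinarith [norm_nonneg (u' t), norm_nonneg gx]
  refine ⟨hBbd, ?_⟩
  rcases hmain with ⟨hξ0, _⟩ | ⟨hξ0, _, hAB, hApos, hG1, _, _, hcol⟩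
  · rw [hξ0, norm_zero]
    have : 0 ≤ K₁ / c * ‖w' t‖ := by positivity
    positivity
  · have hgxc : c ≤ ‖gx‖ := hyp1 a (w t) hG1
    have hgxpos : 0 < ‖gx‖ := lt_of_lt_of_le hc hgxc
    have hne : ‖gx‖ ≠ 0 := hgxpos.ne'
    have hnorm : ‖ξ' t‖ = ⟪ξ' t, gx⟫ / ‖gx‖ := by
      have h := congrArg (fun y : X => ‖y‖) hcol
      rw [h, norm_smul, Real.norm_eq_abs, abs_of_pos (div_pos hApos (by positivity)), sq]
      field_simp
    have hAle : ⟪ξ' t, gx⟫ ≤ ‖gx‖ * ‖u' t‖ + K₁ * ‖w' t‖ := by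
      rw [hAB]
      exact (le_abs_self _).trans hBbd
    rw [hnorm, div_le_iff₀ hgxpos]
    have hK1w : K₁ * ‖w' t‖ ≤ K₁ / c * ‖w' t‖ * ‖gx‖ := by
      rw [div_mul_eq_mul_div, div_mul_eq_mul_div, le_div_iff₀ hc]
      nlinarith [mul_le_mul_of_nonneg_left hgxc (mul_nonneg hK₁.le (norm_nonneg (w' t)))]
    nlinarith [norm_nonneg (u' t)]
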